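/- Let G : ℝ → ℝ be a continuous, strictly increasing bijection of ℝ onto ℝ, let b̃ : ℝ → ℝ be continuous and one-sided Lipschitz with constant L > 0, and let h ∈ (0, 1/L). Then for every a ∈ ℝ there exists a unique x ∈ ℝ such that G(x) − h·b̃(G(x)) = a. In particular, given any x₀, s ∈ ℝ, there is a unique x₁ ∈ ℝ with G(x₁) = G(x₀) + h·b̃(G(x₁)) + s, so each step of the transformed semi-implicit Euler–Maruyama recursion is well-defined. -/
import Mathlib


/-- for `G` a continuous strictly increasing bijection of `ℝ`, `b̃` continuous
and one-sided Lipschitz with constant `L`, and `h ∈ (0, 1/L)`, the equation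
`G x - h·b̃(G x) = a` has a unique solution for every `a`; in particular each step of the
transformed semi-implicit Euler–Maruyama recursion is well defined. -/
theorem stmt_2 (G : ℝ → ℝ) (hGcont : Continuous G) (hGmono : StrictMono G)
    (hGbij : Function.Bijective G)
    (btilde : ℝ → ℝ) (hbcont : Continuous btilde) (L : ℝ) (hL : 0 < L)
    (hosl : ∀ x y : ℝ, (x - y) * (btilde x - btilde y) ≤ L * (x - y) ^ 2)
    (h : ℝ) (hh : h ∈ Set.Ioo 0 (1 / L)) :
    (∀ a : ℝ, ∃! x : ℝ, G x - h * btilde (G x) = a) ∧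
    (∀ x₀ s : ℝ, ∃! x₁ : ℝ, G x₁ = G x₀ + h * btilde (G x₁) + s) := by
  obtain ⟨hh0, hh1⟩ := hh
  have hhL : h * L < 1 := by
    have := (lt_div_iff₀ hL).mp hh1
    linarith
  have hcL : 0 < 1 - h * L := by linarith
  set F : ℝ → ℝ := fun u => u - h * btilde u with hF
  have hFcont : Continuous F := continuous_id.sub (continuous_const.mul hbcont)
  have hFmono : StrictMono F := by
    intro x y hxy
    have h1 := hosl y x
    have h2 := mul_le_mul_of_nonneg_left h1 hh0.le
    have h3 := sub_pos.mpr hxy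
    simp only [hF]
    nlinarith [mul_pos h3 h3, mul_pos hcL (mul_pos h3 h3)]
  have hlin : ∀ u : ℝ, 0 ≤ u → (1 - h * L) * u + F 0 ≤ F u := by
    intro u hu
    rcases hu.eq_or_lt with rfl | hu'
    · simp only [hF]; ring_nf; linarith
    · have h1 := hosl u 0
      have h2 := mul_le_mul_of_nonneg_left h1 hh0.le
      simp only [hF]
      nlinarith [hu', mul_pos hh0 hu']
  have hlin' : ∀ u : ℝ, u ≤ 0 → F u ≤ (1 - h * L) * u + F 0 := by
    intro u hu
    rcases hu.eq_or_lt with rfl | hu'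
    · simp only [hF]; ring_nf; linarith
    · have h1 := hosl u 0
      have h2 := mul_le_mul_of_nonneg_left h1 hh0.le
      simp only [hF]
      nlinarith [hu', mul_pos hh0 (neg_pos.mpr hu')]
  have hsurj : ∀ a : ℝ, ∃ u, F u = a := by
    intro a
    set t := (a - F 0) / (1 - h * L) with ht
    have hct : (1 - h * L) * t = a - F 0 := by
      rw [ht]; field_simp
    set u1 := min 0 t
    set u2 := max 0 t
    have hle : u1 ≤ u2 := le_trans (min_le_left _ _) (le_max_left _ _)
    have h1 : F u1 ≤ a := by
      have := hlin' u1 (min_le_left _ _)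
      have h2 : (1 - h * L) * u1 ≤ (1 - h * L) * t :=
        mul_le_mul_of_nonneg_left (min_le_right _ _) (le_of_lt hcL)
      linarith
    have h2 : a ≤ F u2 := by
      have := hlin u2 (le_max_left _ _)
      have h2 : (1 - h * L) * t ≤ (1 - h * L) * u2 :=
        mul_le_mul_of_nonneg_left (le_max_right _ _) (le_of_lt hcL)
      linarith
    have := intermediate_value_Icc hle hFcont.continuousOn ⟨h1, h2⟩
    obtain ⟨u, _, hu⟩ := this
    exact ⟨u, hu⟩
  have hmain : ∀ a : ℝ, ∃! x : ℝ, G x - h * btilde (G x) = a := by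
    intro a
    obtain ⟨u, hu⟩ := hsurj a
    obtain ⟨x, hx⟩ := hGbij.surjective u
    simp only [hF] at hu
    refine ⟨x, ?_, ?_⟩
    · show G x - h * btilde (G x) = a
      rw [hx]; exact hu
    · intro y hy
      have heq : F (G y) = F (G x) := by
        simp only [hF]
        rw [hx]
        exact hy.trans hu.symm
      exact hGmono.injective (hFmono.injective heq)
  refine ⟨hmain, fun x₀ s => ?_⟩
  obtain ⟨x, hx, hxu⟩ := hmain (G x₀ + s)
  exact ⟨x, by linarith, fun y hy => hxu y (by linarith)⟩
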